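/- Let 0 ≤ r ≤ d/2 where d = |z₁ - z₂| > 0 for distinct z₁, z₂ ∈ ℂ, let α₁, α₂ > 0, and let f ∈ L^∞(ℂ). Then ∫_{A(r)} |f(s)| / (|s-z₁|^{α₁}|s-z₂|^{α₂}) ds ≤ C_{α₁,α₂} [ ‖f‖_∞ ( (∫_r^{d/2} x^{1-α₁} dx) |z₁-z₂|^{-α₂} + (∫_r^{d/2} x^{1-α₂} dx) |z₁-z₂|^{-α₁} ) + ∫_{A(d/2)} |f(s)|/|s - z₁|^{α₁+α₂} ds ], where A(ρ) = {s : |s - z₁| ≥ ρ and |s - z₂| ≥ ρ}. -/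

import Mathlib

open MeasureTheory

open MeasureTheory Set Real

lemma meas_rpow_const (c : ℝ) : Measurable fun x : ℝ => x ^ c := by measurability

lemma lintegral_comp_polarCoord_symm_real (g : ℝ × ℝ → ENNReal) :
    ∫⁻ p, g p = ∫⁻ p in polarCoord.target, ENNReal.ofReal p.1 * g (polarCoord.symm p) := by
  set B : ℝ × ℝ → ℝ × ℝ →L[ℝ] ℝ × ℝ := fun p =>
    LinearMap.toContinuousLinearMap (Matrix.toLin (Module.Basis.finTwoProd ℝ) (Module.Basis.finTwoProd ℝ)
      !![Real.cos p.2, -p.1 * Real.sin p.2; Real.sin p.2, p.1 * Real.cos p.2])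
  have B_det : ∀ p, (B p).det = p.1 := by
    intro p
    conv_rhs => rw [← one_mul p.1, ← Real.cos_sq_add_sin_sq p.2]
    simp only [B, neg_mul, LinearMap.det_toContinuousLinearMap, LinearMap.det_toLin,
      Matrix.det_fin_two_of, sub_neg_eq_add]
    ring
  calc
    ∫⁻ p, g p = ∫⁻ p in polarCoord.source, g p := by
      rw [← setLIntegral_univ]
      exact setLIntegral_congr polarCoord_source_ae_eq_univ.symm
    _ = ∫⁻ p in polarCoord.symm '' polarCoord.target, g p := by
      rw [polarCoord.symm_image_target_eq_source]
    _ = ∫⁻ p in polarCoord.target, ENNReal.ofReal |(B p).det| * g (polarCoord.symm p) := by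
      apply lintegral_image_eq_lintegral_abs_det_fderiv_mul volume
        polarCoord.open_target.measurableSet
        (fun p _ => (hasFDerivAt_polarCoord_symm p).hasFDerivWithinAt)
        polarCoord.symm.injOn
    _ = ∫⁻ p in polarCoord.target, ENNReal.ofReal p.1 * g (polarCoord.symm p) := by
      apply setLIntegral_congr_fun polarCoord.open_target.measurableSet
      intro p hp
      dsimp only
      rw [B_det, abs_of_pos hp.1]

lemma lintegral_comp_polarCoord_symm_complex (g : ℂ → ENNReal) (hg : Measurable g) :
    ∫⁻ p, g p = ∫⁻ p in polarCoord.target,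
      ENNReal.ofReal p.1 * g (Complex.polarCoord.symm p) := by
  rw [← (Complex.volume_preserving_equiv_real_prod.symm).lintegral_comp hg,
    lintegral_comp_polarCoord_symm_real]
  rfl

lemma annulus_lintegral_eq (z : ℂ) (α r R : ℝ) (hr : 0 ≤ r) :
    ∫⁻ s in {s : ℂ | r ≤ ‖s - z‖ ∧ ‖s - z‖ < R},
      ENNReal.ofReal (‖s - z‖ ^ (-α))
    = ENNReal.ofReal (2 * π) * ∫⁻ x in Set.Ioo r R, ENNReal.ofReal (x ^ (1 - α)) := by
  have hrpow : Measurable fun w : ℂ => ENNReal.ofReal (‖w‖ ^ (-α)) :=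
    ENNReal.measurable_ofReal.comp ((meas_rpow_const (-α)).comp continuous_norm.measurable)
  have hann : MeasurableSet {w : ℂ | r ≤ ‖w‖ ∧ ‖w‖ < R} :=
    ((isClosed_le continuous_const continuous_norm).measurableSet).inter
      ((isOpen_lt continuous_norm continuous_const).measurableSet)
  set g : ℂ → ENNReal :=
    ({w : ℂ | r ≤ ‖w‖ ∧ ‖w‖ < R}).indicator
      (fun w => ENNReal.ofReal (‖w‖ ^ (-α))) with hg
  have hgmeas : Measurable g := hrpow.indicator hann
  have hset : {s : ℂ | r ≤ ‖s - z‖ ∧ ‖s - z‖ < R}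
      = (fun s : ℂ => s - z) ⁻¹' {w : ℂ | r ≤ ‖w‖ ∧ ‖w‖ < R} := rfl
  have step1 : (∫⁻ s in {s : ℂ | r ≤ ‖s - z‖ ∧ ‖s - z‖ < R},
      ENNReal.ofReal (‖s - z‖ ^ (-α))) = ∫⁻ w, g w := by
    rw [← lintegral_indicator (hset ▸ (hann.preimage (measurable_id.sub_const z)))]
    have heq : ∀ s : ℂ, ({s : ℂ | r ≤ ‖s - z‖ ∧ ‖s - z‖ < R}).indicator
        (fun s => ENNReal.ofReal (‖s - z‖ ^ (-α))) s = g (s - z) := by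
      intro s
      rw [hg, hset]
      rfl
    simp_rw [heq]
    exact (measurePreserving_sub_right volume z).lintegral_comp hgmeas
  rw [step1, lintegral_comp_polarCoord_symm_complex g hgmeas]
  set F : ℝ → ENNReal := (Set.Ico r R).indicator
    (fun x => ENNReal.ofReal x * ENNReal.ofReal (x ^ (-α))) with hF
  have hFmeas : Measurable F :=
    (ENNReal.measurable_ofReal.mul
      (ENNReal.measurable_ofReal.comp (meas_rpow_const (-α)))).indicator measurableSet_Ico
  have stepA : ∫⁻ p in polarCoord.target, ENNReal.ofReal p.1 * g (Complex.polarCoord.symm p)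
      = ∫⁻ p in polarCoord.target, F p.1 := by
    apply setLIntegral_congr_fun polarCoord.open_target.measurableSet
    intro p hp
    dsimp only
    have hp1 : 0 < p.1 := hp.1
    have habs : ‖Complex.polarCoord.symm p‖ = p.1 := by
      rw [Complex.norm_polarCoord_symm, abs_of_pos hp1]
    rw [hg, hF]
    by_cases h : r ≤ p.1 ∧ p.1 < R
    · rw [Set.indicator_of_mem (show _ ∈ {w : ℂ | r ≤ ‖w‖ ∧ ‖w‖ < R} by
          rw [Set.mem_setOf_eq, habs]; exact h),
        Set.indicator_of_mem (by exact h), habs]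
    · rw [Set.indicator_of_notMem (show _ ∉ {w : ℂ | r ≤ ‖w‖ ∧ ‖w‖ < R} by
          rw [Set.mem_setOf_eq, habs]; exact h),
        Set.indicator_of_notMem (by exact h), mul_zero]
  rw [stepA]
  have htarget : polarCoord.target = Set.Ioi (0:ℝ) ×ˢ Set.Ioo (-π) π := rfl
  rw [htarget, Measure.volume_eq_prod, ← Measure.prod_restrict,
    lintegral_prod (fun p => F p.1) ((hFmeas.comp measurable_fst).aemeasurable)]
  simp only [lintegral_const, Measure.restrict_apply MeasurableSet.univ, Set.univ_inter,
    Real.volume_Ioo]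
  have h2pi : ENNReal.ofReal (π - -π) = ENNReal.ofReal (2 * π) := by
    norm_num [two_mul]
  rw [h2pi]
  rw [lintegral_mul_const _ hFmeas, hF, lintegral_indicator measurableSet_Ico,
    Measure.restrict_restrict measurableSet_Ico]
  have hae : (Set.Ico r R ∩ Set.Ioi 0 : Set ℝ) =ᵐ[volume] Set.Ioo r R := by
    rw [Filter.eventuallyEq_set]
    rw [ae_iff]
    apply measure_mono_null (t := {r}) ?_ Real.volume_singleton
    intro x hx
    simp only [Set.mem_setOf_eq, Set.mem_inter_iff, Set.mem_Ico, Set.mem_Ioi,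
      Set.mem_Ioo] at hx
    rw [Set.mem_singleton_iff]
    by_contra hxr
    apply hx
    constructor
    · rintro ⟨⟨h1, h2⟩, h3⟩
      exact ⟨h1.lt_of_ne fun he => hxr he.symm, h2⟩
    · rintro ⟨h1, h2⟩
      exact ⟨⟨h1.le, h2⟩, lt_of_le_of_lt hr h1⟩
  rw [setLIntegral_congr hae]
  rw [mul_comm]
  congr 1
  apply setLIntegral_congr_fun measurableSet_Ioo
  intro x hx
  dsimp only
  have hx0 : 0 < x := lt_of_le_of_lt hr hx.1
  rw [← ENNReal.ofReal_mul hx0.le]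
  congr 1
  rw [sub_eq_add_neg, Real.rpow_add hx0, Real.rpow_one]

lemma near_bound (α β : ℝ) (hβ : 0 ≤ β) (z w : ℂ) (f : ℂ → ℝ) (hf : Measurable f)
    (r : ℝ) (hr : 0 ≤ r) (hd : 0 < ‖z - w‖) :
    ∫⁻ s in {s : ℂ | r ≤ ‖s - z‖ ∧ ‖s - z‖ < ‖z - w‖ / 2},
      ENNReal.ofReal (|f s| / (‖s - z‖ ^ α * ‖s - w‖ ^ β))
    ≤ ENNReal.ofReal (2 * π * 2 ^ β) * (eLpNorm f ⊤ volume *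
        ((∫⁻ x in Set.Ioo r (‖z - w‖ / 2), ENNReal.ofReal (x ^ (1 - α))) *
          ENNReal.ofReal (‖z - w‖ ^ (-β)))) := by
  set d := ‖z - w‖ with hdd
  set N := eLpNorm f ⊤ volume with hNN
  set T : Set ℂ := {s : ℂ | r ≤ ‖s - z‖ ∧ ‖s - z‖ < d / 2} with hT
  have hTmeas : MeasurableSet T :=
    ((isClosed_le continuous_const (continuous_norm.comp
      (continuous_id.sub continuous_const))).measurableSet).inter
      ((isOpen_lt (continuous_norm.comp (continuous_id.sub continuous_const))
        continuous_const).measurableSet)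
  have hN0 : ∀ᵐ s ∂(volume : Measure ℂ), ENNReal.ofReal |f s| ≤ N := by
    filter_upwards [ae_le_eLpNormEssSup (f := f) (μ := (volume : Measure ℂ))] with s hs
    rw [hNN, eLpNorm_exponent_top, ← Real.enorm_eq_ofReal_abs]
    exact hs
  -- pointwise bound
  have key : ∫⁻ s in T, ENNReal.ofReal (|f s| / (‖s - z‖ ^ α
        * ‖s - w‖ ^ β))
      ≤ ∫⁻ s in T, N * ENNReal.ofReal ((d/2) ^ (-β)) *
          ENNReal.ofReal (‖s - z‖ ^ (-α)) := by
    apply lintegral_mono_ae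
    filter_upwards [ae_restrict_of_ae hN0, ae_restrict_mem hTmeas] with s hNs hsT
    have hsw : d / 2 ≤ ‖s - w‖ := by
      have htri : d ≤ ‖z - s‖ + ‖s - w‖ := by
        rw [hdd]
        simpa using norm_sub_le_norm_sub_add_norm_sub z s w
      have h1 : ‖z - s‖ < d / 2 := by
        rw [norm_sub_rev z s]; exact hsT.2
      linarith [hsT.2, htri, h1]
    have hA : (0:ℝ) ≤ ‖s - z‖ := norm_nonneg _
    have hB : (0:ℝ) < ‖s - w‖ := lt_of_lt_of_le (by positivity) hsw
    have hreal : |f s| / (‖s - z‖ ^ α * ‖s - w‖ ^ β)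
        = |f s| * ((‖s - w‖ ^ β)⁻¹ * (‖s - z‖ ^ α)⁻¹) := by
      rw [div_eq_mul_inv, mul_inv, mul_comm ((‖s - z‖ ^ α)⁻¹)]
    have hb1 : (‖s - w‖ ^ β)⁻¹ ≤ (d/2) ^ (-β) := by
      rw [← Real.rpow_neg hB.le]
      exact Real.rpow_le_rpow_of_nonpos (by positivity) hsw (neg_nonpos.mpr hβ)
    have hprod : (‖s - w‖ ^ β)⁻¹ * (‖s - z‖ ^ α)⁻¹
        ≤ (d/2) ^ (-β) * ‖s - z‖ ^ (-α) := by
      rw [← Real.rpow_neg hA]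
      exact mul_le_mul_of_nonneg_right hb1 (Real.rpow_nonneg hA _)
    calc ENNReal.ofReal (|f s| / (‖s - z‖ ^ α * ‖s - w‖ ^ β))
        = ENNReal.ofReal |f s| *
            ENNReal.ofReal ((‖s - w‖ ^ β)⁻¹ * (‖s - z‖ ^ α)⁻¹) := by
          rw [hreal, ENNReal.ofReal_mul (abs_nonneg _)]
      _ ≤ N * ENNReal.ofReal ((d/2) ^ (-β) * ‖s - z‖ ^ (-α)) :=
          mul_le_mul' hNs (ENNReal.ofReal_le_ofReal hprod)
      _ = N * ENNReal.ofReal ((d/2) ^ (-β)) * ENNReal.ofReal (‖s - z‖ ^ (-α)) := by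
          rw [ENNReal.ofReal_mul (by positivity), mul_assoc]
  have hmeas2 : Measurable fun s : ℂ => ENNReal.ofReal (‖s - z‖ ^ (-α)) :=
    ENNReal.measurable_ofReal.comp ((meas_rpow_const (-α)).comp
      (continuous_norm.measurable.comp (measurable_id.sub_const z)))
  calc ∫⁻ s in T, ENNReal.ofReal (|f s| / (‖s - z‖ ^ α * ‖s - w‖ ^ β))
      ≤ ∫⁻ s in T, N * ENNReal.ofReal ((d/2) ^ (-β)) *
          ENNReal.ofReal (‖s - z‖ ^ (-α)) := key
    _ = N * ENNReal.ofReal ((d/2) ^ (-β)) *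
          ∫⁻ s in T, ENNReal.ofReal (‖s - z‖ ^ (-α)) :=
        lintegral_const_mul _ hmeas2
    _ = N * ENNReal.ofReal ((d/2) ^ (-β)) * (ENNReal.ofReal (2 * π) *
          ∫⁻ x in Set.Ioo r (d/2), ENNReal.ofReal (x ^ (1 - α))) := by
        rw [annulus_lintegral_eq z α r (d/2) hr]
    _ ≤ ENNReal.ofReal (2 * π * 2 ^ β) * (N *
          ((∫⁻ x in Set.Ioo r (d/2), ENNReal.ofReal (x ^ (1 - α))) *
            ENNReal.ofReal (d ^ (-β)))) := by
        have hd2 : (d/2 : ℝ) ^ (-β) = 2 ^ β * d ^ (-β) := by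
          rw [Real.div_rpow hd.le (by norm_num : (0:ℝ) ≤ 2),
            Real.rpow_neg (by norm_num : (0:ℝ) ≤ 2), div_eq_mul_inv, inv_inv, mul_comm]
        rw [hd2, ENNReal.ofReal_mul (by positivity : (0:ℝ) ≤ 2 ^ β),
          ENNReal.ofReal_mul (by positivity : (0:ℝ) ≤ 2 * π)]
        apply le_of_eq
        ring

theorem Iest_two_singularities (α₁ α₂ : ℝ) (h₁ : 0 < α₁) (h₂ : 0 < α₂) :
    ∃ C > 0, ∀ (z₁ z₂ : ℂ) (f : ℂ → ℝ) (r : ℝ), z₁ ≠ z₂ → Measurable f →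
      MemLp f ⊤ volume →
      0 ≤ r → r ≤ ‖z₁ - z₂‖ / 2 →
      (∫⁻ s in {s : ℂ | r ≤ ‖s - z₁‖ ∧ r ≤ ‖s - z₂‖},
          ENNReal.ofReal (|f s| / (‖s - z₁‖ ^ α₁ * ‖s - z₂‖ ^ α₂))) ≤
      ENNReal.ofReal C *
        (eLpNorm f ⊤ volume *
            ((∫⁻ x in Set.Ioo r (‖z₁ - z₂‖ / 2), ENNReal.ofReal (x ^ (1 - α₁))) *
                ENNReal.ofReal (‖z₁ - z₂‖ ^ (-α₂)) +
             (∫⁻ x in Set.Ioo r (‖z₁ - z₂‖ / 2), ENNReal.ofReal (x ^ (1 - α₂))) *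
                ENNReal.ofReal (‖z₁ - z₂‖ ^ (-α₁))) +
          ∫⁻ s in {s : ℂ | ‖z₁ - z₂‖ / 2 ≤ ‖s - z₁‖ ∧
              ‖z₁ - z₂‖ / 2 ≤ ‖s - z₂‖},
            ENNReal.ofReal (|f s| / ‖s - z₁‖ ^ (α₁ + α₂))) := by
  have hc0 : (0:ℝ) ≤ 2 * π * 2 ^ α₁ := by positivity
  have hc0' : (0:ℝ) ≤ 2 * π * 2 ^ α₂ := by positivity
  have hc3 : (0:ℝ) ≤ (3:ℝ) ^ α₂ := by positivity
  refine ⟨2 * π * 2 ^ α₁ + 2 * π * 2 ^ α₂ + 3 ^ α₂ + 1, by positivity, ?_⟩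
  intro z₁ z₂ f r hne hfm _hmem hr _hrd
  set C : ℝ := 2 * π * 2 ^ α₁ + 2 * π * 2 ^ α₂ + 3 ^ α₂ + 1 with hC
  have hd : 0 < ‖z₁ - z₂‖ := by
    simpa using sub_ne_zero.mpr hne
  set d : ℝ := ‖z₁ - z₂‖ with hdd
  set N := eLpNorm f ⊤ volume with hNN
  set I₁ := ∫⁻ x in Set.Ioo r (d/2), ENNReal.ofReal (x ^ (1 - α₁)) with hI₁
  set I₂ := ∫⁻ x in Set.Ioo r (d/2), ENNReal.ofReal (x ^ (1 - α₂)) with hI₂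
  set G : ℂ → ENNReal := fun s =>
    ENNReal.ofReal (|f s| / (‖s - z₁‖ ^ α₁ * ‖s - z₂‖ ^ α₂)) with hG
  set SF : Set ℂ := {s : ℂ | d/2 ≤ ‖s - z₁‖ ∧ d/2 ≤ ‖s - z₂‖} with hSF
  set S₁ : Set ℂ := {s : ℂ | r ≤ ‖s - z₁‖ ∧ ‖s - z₁‖ < d/2} with hS₁
  set S₂ : Set ℂ := {s : ℂ | r ≤ ‖s - z₂‖ ∧ ‖s - z₂‖ < d/2} with hS₂
  set FarI := ∫⁻ s in SF, ENNReal.ofReal (|f s| / ‖s - z₁‖ ^ (α₁ + α₂)) with hFarI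
  have hsub : {s : ℂ | r ≤ ‖s - z₁‖ ∧ r ≤ ‖s - z₂‖}
      ⊆ S₁ ∪ S₂ ∪ SF := by
    intro s hs
    by_cases hx1 : ‖s - z₁‖ < d/2
    · exact Or.inl (Or.inl ⟨hs.1, hx1⟩)
    by_cases hx2 : ‖s - z₂‖ < d/2
    · exact Or.inl (Or.inr ⟨hs.2, hx2⟩)
    · exact Or.inr ⟨not_lt.mp hx1, not_lt.mp hx2⟩
  have hstep : (∫⁻ s in {s : ℂ | r ≤ ‖s - z₁‖ ∧ r ≤ ‖s - z₂‖}, G s)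
      ≤ (∫⁻ s in S₁, G s) + (∫⁻ s in S₂, G s) + (∫⁻ s in SF, G s) :=
    calc (∫⁻ s in {s : ℂ | r ≤ ‖s - z₁‖ ∧ r ≤ ‖s - z₂‖}, G s)
        ≤ ∫⁻ s in S₁ ∪ S₂ ∪ SF, G s := lintegral_mono_set hsub
      _ ≤ (∫⁻ s in S₁ ∪ S₂, G s) + (∫⁻ s in SF, G s) := lintegral_union_le _ _ _
      _ ≤ (∫⁻ s in S₁, G s) + (∫⁻ s in S₂, G s) + (∫⁻ s in SF, G s) :=
          add_le_add_left (lintegral_union_le _ _ _) _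
  -- bound on S₁
  have hT1 : (∫⁻ s in S₁, G s)
      ≤ ENNReal.ofReal (2 * π * 2 ^ α₂) * (N * (I₁ * ENNReal.ofReal (d ^ (-α₂)))) :=
    near_bound α₁ α₂ h₂.le z₁ z₂ f hfm r hr hd
  -- bound on S₂
  have hT2 : (∫⁻ s in S₂, G s)
      ≤ ENNReal.ofReal (2 * π * 2 ^ α₁) * (N * (I₂ * ENNReal.ofReal (d ^ (-α₁)))) := by
    have habs : ‖z₂ - z₁‖ = d := norm_sub_rev z₂ z₁
    have hd' : 0 < ‖z₂ - z₁‖ := by rw [habs]; exact hd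
    have hT2' := near_bound α₂ α₁ h₁.le z₂ z₁ f hfm r hr hd'
    rw [habs] at hT2'
    have hcomm : ∀ s : ℂ, ENNReal.ofReal
        (|f s| / (‖s - z₂‖ ^ α₂ * ‖s - z₁‖ ^ α₁)) = G s := by
      intro s
      rw [hG, mul_comm]
    simp_rw [hcomm] at hT2'
    exact hT2'
  -- bound on SF
  have hSFmeas : MeasurableSet SF :=
    ((isClosed_le continuous_const (continuous_norm.comp
      (continuous_id.sub continuous_const))).measurableSet).inter
      ((isClosed_le continuous_const (continuous_norm.comp
      (continuous_id.sub continuous_const))).measurableSet)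
  have hT3 : (∫⁻ s in SF, G s) ≤ ENNReal.ofReal (3 ^ α₂) * FarI := by
    have hmeasF : Measurable fun s : ℂ =>
        ENNReal.ofReal (|f s| / ‖s - z₁‖ ^ (α₁ + α₂)) :=
      ENNReal.measurable_ofReal.comp (hfm.abs.div (((meas_rpow_const (α₁ + α₂)).comp
        (continuous_norm.measurable.comp (measurable_id.sub_const z₁)))))
    calc (∫⁻ s in SF, G s)
        ≤ ∫⁻ s in SF, ENNReal.ofReal (3 ^ α₂) *
            ENNReal.ofReal (|f s| / ‖s - z₁‖ ^ (α₁ + α₂)) := by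
          apply lintegral_mono_ae
          filter_upwards [ae_restrict_mem hSFmeas] with s hsF
          have hA : (0:ℝ) < ‖s - z₁‖ := lt_of_lt_of_le (by positivity) hsF.1
          have hB : (0:ℝ) < ‖s - z₂‖ := lt_of_lt_of_le (by positivity) hsF.2
          have hAB : ‖s - z₁‖ ≤ 3 * ‖s - z₂‖ := by
            have htri : ‖s - z₁‖ ≤ ‖s - z₂‖ + ‖z₂ - z₁‖ :=
              norm_sub_le_norm_sub_add_norm_sub s z₂ z₁
            have : ‖z₂ - z₁‖ = d := norm_sub_rev z₂ z₁
            have h2B := hsF.2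
            rw [this] at htri
            linarith
          have hdenom : ‖s - z₁‖ ^ (α₁ + α₂) / 3 ^ α₂
              ≤ ‖s - z₁‖ ^ α₁ * ‖s - z₂‖ ^ α₂ := by
            have h1 : ‖s - z₁‖ ^ α₂ ≤ (3:ℝ) ^ α₂ * ‖s - z₂‖ ^ α₂ := by
              rw [← Real.mul_rpow (by norm_num) hB.le]
              exact Real.rpow_le_rpow hA.le hAB h₂.le
            rw [Real.rpow_add hA, div_le_iff₀ (by positivity : (0:ℝ) < 3 ^ α₂)]
            calc ‖s - z₁‖ ^ α₁ * ‖s - z₁‖ ^ α₂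
                ≤ ‖s - z₁‖ ^ α₁ * ((3:ℝ) ^ α₂ * ‖s - z₂‖ ^ α₂) :=
                  mul_le_mul_of_nonneg_left h1 (Real.rpow_nonneg hA.le _)
              _ = ‖s - z₁‖ ^ α₁ * ‖s - z₂‖ ^ α₂ * 3 ^ α₂ := by ring
          have hreal : |f s| / (‖s - z₁‖ ^ α₁ * ‖s - z₂‖ ^ α₂)
              ≤ 3 ^ α₂ * (|f s| / ‖s - z₁‖ ^ (α₁ + α₂)) := by
            have hstep2 : |f s| / (‖s - z₁‖ ^ α₁ * ‖s - z₂‖ ^ α₂)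
                ≤ |f s| / (‖s - z₁‖ ^ (α₁ + α₂) / 3 ^ α₂) := by
              exact div_le_div_of_nonneg_left (abs_nonneg _) (by positivity) hdenom
            calc |f s| / (‖s - z₁‖ ^ α₁ * ‖s - z₂‖ ^ α₂)
                ≤ |f s| / (‖s - z₁‖ ^ (α₁ + α₂) / 3 ^ α₂) := hstep2
              _ = 3 ^ α₂ * (|f s| / ‖s - z₁‖ ^ (α₁ + α₂)) := by
                  rw [div_div_eq_mul_div, mul_comm, mul_div_assoc]
          exact le_trans (ENNReal.ofReal_le_ofReal hreal)
            (le_of_eq (ENNReal.ofReal_mul hc3))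
      _ = ENNReal.ofReal (3 ^ α₂) * FarI := lintegral_const_mul _ hmeasF
  -- combine
  have hCb1 : ENNReal.ofReal (2 * π * 2 ^ α₂) ≤ ENNReal.ofReal C :=
    ENNReal.ofReal_le_ofReal (by rw [hC]; linarith)
  have hCb2 : ENNReal.ofReal (2 * π * 2 ^ α₁) ≤ ENNReal.ofReal C :=
    ENNReal.ofReal_le_ofReal (by rw [hC]; linarith)
  have hCb3 : ENNReal.ofReal ((3:ℝ) ^ α₂) ≤ ENNReal.ofReal C :=
    ENNReal.ofReal_le_ofReal (by rw [hC]; linarith [Real.pi_pos])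
  calc (∫⁻ s in {s : ℂ | r ≤ ‖s - z₁‖ ∧ r ≤ ‖s - z₂‖}, G s)
      ≤ (∫⁻ s in S₁, G s) + (∫⁻ s in S₂, G s) + (∫⁻ s in SF, G s) := hstep
    _ ≤ ENNReal.ofReal C * (N * (I₁ * ENNReal.ofReal (d ^ (-α₂))))
        + ENNReal.ofReal C * (N * (I₂ * ENNReal.ofReal (d ^ (-α₁))))
        + ENNReal.ofReal C * FarI := by
        refine add_le_add (add_le_add ?_ ?_) ?_
        · exact hT1.trans (mul_le_mul_left hCb1 _)
        · exact hT2.trans (mul_le_mul_left hCb2 _)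
        · exact hT3.trans (mul_le_mul_left hCb3 _)
    _ = ENNReal.ofReal C * (N * (I₁ * ENNReal.ofReal (d ^ (-α₂))
          + I₂ * ENNReal.ofReal (d ^ (-α₁))) + FarI) := by ring
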